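/- Let F be a finite field of characteristic p and let η(y) = ∑_{i=0}^k a_i y^{p^i} ∈ (F[t])[y] be an additive polynomial with k ≥ 1 and a_k ≠ 0. Then there exist infinitely many monic Q ∈ F[t] (with lpf(Q) arbitrarily large) such that the induced additive map η : F[t]/(Q) → F[t]/(Q) is not surjective. -/

import Mathlib

/-- `lpf Q` is the size `|F|^(deg P)` of the least monic irreducible factor `P` of `Q`. -/
noncomputable def lpf {F : Type*} [Field F] [Fintype F] (Q : Polynomial F) : ℕ :=
  sInf {n : ℕ | ∃ P : Polynomial F, P.Monic ∧ Irreducible P ∧ P ∣ Q ∧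
    n = Fintype.card F ^ P.natDegree}

open Polynomial

section Aux

variable {F : Type*} [Field F] [Fintype F]

/-- Any irreducible polynomial whose degree divides `n` divides `X^(q^n) - X`. -/
lemma aux_dvd_pow_sub (P : Polynomial F) (hi : Irreducible P) {n : ℕ}
    (hd : P.natDegree ∣ n) : P ∣ X ^ (Fintype.card F) ^ n - X := by
  haveI : Fact (Irreducible P) := ⟨hi⟩
  have hP0 : P ≠ 0 := hi.ne_zero
  set pb := AdjoinRoot.powerBasis hP0 with hpb
  haveI : Module.Finite F (AdjoinRoot P) := Module.Finite.of_basis pb.basis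
  haveI : Finite (AdjoinRoot P) := Module.finite_of_finite F
  haveI : Fintype (AdjoinRoot P) := Fintype.ofFinite _
  have hcard : Fintype.card (AdjoinRoot P) = Fintype.card F ^ P.natDegree := by
    rw [Module.card_fintype pb.basis]
    congr 1
    simp [hpb, AdjoinRoot.powerBasis]
  obtain ⟨c, rfl⟩ := hd
  have hroot : (AdjoinRoot.root P) ^ (Fintype.card F) ^ (P.natDegree * c)
      = AdjoinRoot.root P := by
    rw [pow_mul, ← hcard]
    exact FiniteField.pow_card_pow c _
  rw [← AdjoinRoot.mk_eq_zero, map_sub, map_pow, AdjoinRoot.mk_X, hroot, sub_self]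

/-- Lower bound for `lpf` of a power of a monic irreducible polynomial. -/
lemma aux_lpf (P : Polynomial F) (hm : P.Monic) (hi : Irreducible P) {N j : ℕ}
    (hj : j ≠ 0) (hN : N ≤ Fintype.card F ^ P.natDegree) : N ≤ lpf (P ^ j) := by
  apply le_csInf
  · exact ⟨Fintype.card F ^ P.natDegree, P, hm, hi, dvd_pow_self P hj, rfl⟩
  · rintro n ⟨P', hm', hi', hdvd, rfl⟩
    have hprime : Prime P := hi.prime
    have hP'P : P' ∣ P := by
      have : Prime P' := hi'.prime
      exact this.dvd_of_dvd_pow hdvd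
    have : P' = P := eq_of_monic_of_associated hm' hm (hi'.associated_of_dvd hi hP'P)
    rw [this]
    exact hN

/-- If `Q` divides the value of the additive polynomial at some `h` not divisible by `Q`,
then the induced map on `F[t]/(Q)` is not surjective. -/
lemma aux_nonsurj (p k : ℕ) (hp : p ≠ 0) (a : ℕ → Polynomial F) (Q h : Polynomial F)
    (hQ0 : Q ≠ 0) (hndvd : ¬ Q ∣ h)
    (hdvd : Q ∣ ∑ i ∈ Finset.range (k + 1), a i * h ^ p ^ i) :
    ¬ Function.Surjective (fun x : Polynomial F ⧸ Ideal.span {Q} =>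
        Polynomial.aeval x
          (∑ i ∈ Finset.range (k + 1), Polynomial.C (a i) * Polynomial.X ^ p ^ i)) := by
  intro hsurj
  haveI : Module.Finite F (AdjoinRoot Q) :=
    Module.Finite.of_basis (AdjoinRoot.powerBasis hQ0).basis
  haveI hfin : Finite (AdjoinRoot Q) := Module.finite_of_finite F
  haveI : Finite (Polynomial F ⧸ Ideal.span {Q}) := hfin
  set f := (fun x : Polynomial F ⧸ Ideal.span {Q} =>
      Polynomial.aeval x
        (∑ i ∈ Finset.range (k + 1), Polynomial.C (a i) * Polynomial.X ^ p ^ i)) with hf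
  have hinj : Function.Injective f := Finite.injective_iff_surjective.mpr hsurj
  have hmk : ∀ g : Polynomial F,
      f (Ideal.Quotient.mk (Ideal.span {Q}) g) =
        Ideal.Quotient.mk (Ideal.span {Q}) (∑ i ∈ Finset.range (k + 1), a i * g ^ p ^ i) := by
    intro g
    have halg : (algebraMap (Polynomial F) (Polynomial F ⧸ Ideal.span {Q})) =
        Ideal.Quotient.mk (Ideal.span {Q}) := rfl
    simp only [hf, map_sum, map_mul, map_pow, aeval_C, aeval_X, halg]
  have hx : f (Ideal.Quotient.mk (Ideal.span {Q}) h) = 0 := by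
    rw [hmk h, Ideal.Quotient.eq_zero_iff_dvd]
    exact hdvd
  have h0 : f 0 = 0 := by
    have e0 : (0 : Polynomial F ⧸ Ideal.span {Q}) = Ideal.Quotient.mk (Ideal.span {Q}) 0 := rfl
    have hz : (∑ i ∈ Finset.range (k + 1), a i * (0 : Polynomial F) ^ p ^ i) = 0 := by
      apply Finset.sum_eq_zero
      intro i _
      rw [zero_pow (pow_ne_zero i hp), mul_zero]
    rw [e0, hmk 0, hz, map_zero]
  have : Ideal.Quotient.mk (Ideal.span {Q}) h = 0 := hinj (by rw [hx, h0])
  rw [Ideal.Quotient.eq_zero_iff_dvd] at this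
  exact hndvd this

end Aux

theorem stmt_10 (p : ℕ) [Fact p.Prime] {F : Type*} [Field F] [Fintype F] [CharP F p]
    (k : ℕ) (hk : 1 ≤ k) (a : ℕ → Polynomial F) (hak : a k ≠ 0) :
    ∀ N : ℕ, ∃ Q : Polynomial F, Q.Monic ∧ N ≤ lpf Q ∧
      ¬ Function.Surjective (fun x : Polynomial F ⧸ Ideal.span {Q} =>
        Polynomial.aeval x
          (∑ i ∈ Finset.range (k + 1), Polynomial.C (a i) * Polynomial.X ^ p ^ i)) := by
  intro N
  have hp2 : 2 ≤ p := (Fact.out : p.Prime).two_le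
  have hq : 1 < Fintype.card F := Fintype.one_lt_card
  set q := Fintype.card F with hqdef
  set N' := max N ((a 0).natDegree + 1) with hN'def
  set m := Nat.factorial N' with hmdef
  have hm0 : m ≠ 0 := Nat.factorial_ne_zero _
  set D : Polynomial F := X ^ q ^ m - X with hDdef
  have hD0 : D ≠ 0 := FiniteField.X_pow_card_pow_sub_X_ne_zero (K' := F) hm0 hq
  have hDdeg : D.natDegree = q ^ m := FiniteField.X_pow_card_pow_sub_X_natDegree_eq (K' := F) hm0 hq
  have hqm1 : 1 ≤ q ^ m := Nat.one_le_pow _ _ (by omega)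
  have hsmall : ∀ P : Polynomial F, Irreducible P → P.natDegree ≤ N' → P ∣ D := by
    intro P hPi hle
    exact aux_dvd_pow_sub P hPi (Nat.dvd_factorial hPi.natDegree_pos hle)
  -- a generic bound converting degree bounds to `lpf` bounds
  have hlpf : ∀ P : Polynomial F, N' < P.natDegree → N ≤ q ^ P.natDegree := by
    intro P hP
    calc N ≤ N' := le_max_left _ _
      _ ≤ 2 ^ N' := Nat.lt_two_pow_self.le
      _ ≤ 2 ^ P.natDegree := Nat.pow_le_pow_right (by omega) (by omega)
      _ ≤ q ^ P.natDegree := Nat.pow_le_pow_left (by omega) _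
  by_cases ha0 : a 0 = 0
  · -- case a₀ = 0 : take Q = P² for P a large irreducible
    have hD1 : ¬ IsUnit (D + 1) := by
      apply not_isUnit_of_natDegree_pos
      have : (D + 1).natDegree = D.natDegree := by
        apply natDegree_add_eq_left_of_natDegree_lt
        simpa using (by omega : 0 < q ^ m) |>.trans_eq hDdeg.symm
      omega
    obtain ⟨P, hPm, hPi, hPdvd⟩ := (D + 1).exists_monic_irreducible_factor hD1
    have hPN : N' < P.natDegree := by
      by_contra hle
      push_neg at hle
      have h1 : P ∣ D := hsmall P hPi hle
      have : P ∣ 1 := by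
        have h2 := dvd_sub hPdvd h1
        simpa using h2
      exact hPi.not_isUnit (isUnit_of_dvd_one this)
    have hPpos : 0 < P.natDegree := hPi.natDegree_pos
    refine ⟨P ^ 2, hPm.pow _, ?_, ?_⟩
    · exact aux_lpf P hPm hPi two_ne_zero (hlpf P hPN)
    · apply aux_nonsurj p k (by omega) a (P ^ 2) P (pow_ne_zero _ hPi.ne_zero)
      · intro hdvd
        have := Polynomial.natDegree_le_of_dvd hdvd hPi.ne_zero
        rw [natDegree_pow] at this
        omega
      · apply Finset.dvd_sum
        intro i hi
        rcases Nat.eq_zero_or_pos i with rfl | hipos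
        · simp [ha0]
        · have h2pi : 2 ≤ p ^ i := le_trans hp2 (Nat.le_self_pow (by omega) p)
          exact dvd_mul_of_dvd_right (pow_dvd_pow P h2pi) _
  · -- case a₀ ≠ 0 : Euclid-style construction
    obtain ⟨k', rfl⟩ : ∃ k', k = k' + 1 := ⟨k - 1, by omega⟩
    set B := ∑ i ∈ Finset.range (k' + 2), (a i).natDegree with hBdef
    set M := B + 1 with hMdef
    set h : Polynomial F := a 0 * D ^ M with hhdef
    have hh0 : h ≠ 0 := mul_ne_zero ha0 (pow_ne_zero _ hD0)
    have hhdeg : h.natDegree = (a 0).natDegree + M * q ^ m := by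
      rw [hhdef, natDegree_mul ha0 (pow_ne_zero _ hD0), natDegree_pow, hDdeg]
    have hB : ∀ i ∈ Finset.range (k' + 2), (a i).natDegree < h.natDegree := by
      intro i hi
      have h1 : (a i).natDegree ≤ B :=
        Finset.single_le_sum (fun j _ => Nat.zero_le ((a j).natDegree)) hi
      have h2 : M ≤ M * q ^ m := Nat.le_mul_of_pos_right _ (by omega)
      omega
    set u := ∑ i ∈ Finset.range (k' + 1), a (i + 1) * h ^ (p ^ (i + 1) - 2) with hudef
    have hppow : ∀ i : ℕ, 2 ≤ p ^ (i + 1) := fun i =>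
      le_trans hp2 (Nat.le_self_pow (by omega) p)
    -- the main term of u is nonzero
    have hmain0 : a (k' + 1) * h ^ (p ^ (k' + 1) - 2) ≠ 0 :=
      mul_ne_zero hak (pow_ne_zero _ hh0)
    have hu0 : u ≠ 0 := by
      rw [hudef, Finset.sum_range_succ]
      intro hcontra
      -- degree of the partial sum is smaller than degree of the main term
      have hdeglt : (∑ i ∈ Finset.range k', a (i + 1) * h ^ (p ^ (i + 1) - 2)).degree <
          (a (k' + 1) * h ^ (p ^ (k' + 1) - 2)).degree := by
        apply lt_of_le_of_lt (Polynomial.degree_sum_le _ _)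
        rw [Finset.sup_lt_iff (by
          rw [bot_lt_iff_ne_bot, Ne, Polynomial.degree_eq_bot]
          exact hmain0)]
        intro i hi
        rcases eq_or_ne (a (i + 1)) 0 with hz | hz
        · rw [hz, zero_mul, Polynomial.degree_zero]
          rw [bot_lt_iff_ne_bot, Ne, Polynomial.degree_eq_bot]
          exact hmain0
        · have hterm0 : a (i + 1) * h ^ (p ^ (i + 1) - 2) ≠ 0 :=
            mul_ne_zero hz (pow_ne_zero _ hh0)
          rw [Polynomial.degree_eq_natDegree hterm0, Polynomial.degree_eq_natDegree hmain0]
          norm_cast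
          rw [natDegree_mul hz (pow_ne_zero _ hh0), natDegree_mul hak (pow_ne_zero _ hh0),
            natDegree_pow, natDegree_pow]
          have hiB : (a (i + 1)).natDegree < h.natDegree := by
            apply hB
            simp only [Finset.mem_range] at hi ⊢
            omega
          have hplt : p ^ (i + 1) < p ^ (k' + 1) := by
            apply Nat.pow_lt_pow_right (by omega)
            simp only [Finset.mem_range] at hi
            omega
          have h2i := hppow i
          have h2k := hppow k'
          calc (a (i+1)).natDegree + (p ^ (i+1) - 2) * h.natDegree
              < h.natDegree + (p ^ (i+1) - 2) * h.natDegree := by omega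
            _ = (p ^ (i+1) - 1) * h.natDegree := by
                have : p ^ (i+1) - 1 = (p ^ (i+1) - 2) + 1 := by omega
                rw [this, add_mul, one_mul, add_comm]
            _ ≤ (p ^ (k'+1) - 2) * h.natDegree := by
                apply Nat.mul_le_mul_right
                omega
            _ ≤ (a (k'+1)).natDegree + (p ^ (k'+1) - 2) * h.natDegree := by omega
      -- if the sum were zero, the partial sum equals minus the main term
      have : (∑ i ∈ Finset.range k', a (i + 1) * h ^ (p ^ (i + 1) - 2)) =
          -(a (k' + 1) * h ^ (p ^ (k' + 1) - 2)) := by linear_combination hcontra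
      rw [this, Polynomial.degree_neg] at hdeglt
      exact lt_irrefl _ hdeglt
    set w : Polynomial F := 1 + D ^ M * u with hwdef
    have hDMu0 : D ^ M * u ≠ 0 := mul_ne_zero (pow_ne_zero _ hD0) hu0
    have hDMudeg : 1 ≤ (D ^ M * u).natDegree := by
      rw [natDegree_mul (pow_ne_zero _ hD0) hu0, natDegree_pow, hDdeg]
      have : 1 ≤ M * q ^ m := by
        have : 1 ≤ M := by omega
        exact le_trans this (Nat.le_mul_of_pos_right _ (by omega))
      omega
    have hwdeg : w.natDegree = (D ^ M * u).natDegree := by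
      rw [hwdef]
      apply natDegree_add_eq_right_of_natDegree_lt
      rw [natDegree_one]; omega
    have hwunit : ¬ IsUnit w := by
      apply not_isUnit_of_natDegree_pos
      omega
    obtain ⟨P, hPm, hPi, hPw⟩ := w.exists_monic_irreducible_factor hwunit
    have hPD : ¬ P ∣ D := by
      intro hdvd
      have h1 : P ∣ D ^ M * u := dvd_mul_of_dvd_left (dvd_pow hdvd (by omega)) _
      have h2 : P ∣ 1 := by
        have : (1 : Polynomial F) = w - D ^ M * u := by rw [hwdef]; ring
        rw [this]
        exact dvd_sub hPw h1
      exact hPi.not_isUnit (isUnit_of_dvd_one h2)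
    have hPN : N' < P.natDegree := by
      by_contra hle
      push_neg at hle
      exact hPD (hsmall P hPi hle)
    have hPh : ¬ P ∣ h := by
      intro hdvd
      have hprime : Prime P := hPi.prime
      rw [hhdef] at hdvd
      rcases hprime.dvd_mul.mp hdvd with h1 | h1
      · have := Polynomial.natDegree_le_of_dvd h1 ha0
        omega
      · exact hPD (hprime.dvd_of_dvd_pow h1)
    have hkey : (∑ i ∈ Finset.range (k' + 1 + 1), a i * h ^ p ^ i) = a 0 * h * w := by
      rw [Finset.sum_range_succ']
      have hsum : (∑ i ∈ Finset.range (k' + 1), a (i + 1) * h ^ p ^ (i + 1)) = h ^ 2 * u := by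
        rw [hudef, Finset.mul_sum]
        apply Finset.sum_congr rfl
        intro i _
        have : h ^ 2 * (a (i + 1) * h ^ (p ^ (i + 1) - 2)) =
            a (i + 1) * (h ^ 2 * h ^ (p ^ (i + 1) - 2)) := by ring
        rw [this, ← pow_add]
        congr 2
        have := hppow i
        omega
      rw [hsum]
      have hwexp : a 0 * h * w = a 0 * h + a 0 * D ^ M * (h * u) := by
        rw [hwdef]; ring
      rw [hwexp, ← hhdef]
      have : h * (h * u) = h ^ 2 * u := by ring
      rw [this]
      simp [pow_zero, pow_one]
      ring
    refine ⟨P, hPm, ?_, ?_⟩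
    · have := aux_lpf P hPm hPi one_ne_zero (hlpf P hPN)
      rwa [pow_one] at this
    · apply aux_nonsurj p (k' + 1) (by omega) a P h hPi.ne_zero hPh
      rw [hkey]
      exact Dvd.dvd.mul_left hPw _
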